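/- Let ℓ ≥ 2 be an integer, let e ∈ [1 − 1/ℓ, 1 − 1/(ℓ+1)], let c = (ℓ + √(ℓ(ℓ − e(ℓ+1))))/(ℓ(ℓ+1)), and let p = 4c(1 − ℓc)/(1 − (ℓ−1)c)². Let g be any graphon with e(g) = e such that, for almost every (x,y): g(x,y) = 1 whenever x < kc < y or y < kc < x for some integer k with 1 ≤ k ≤ ℓ−1; g(x,y) = 0 whenever (k−1)c < x,y < kc for some integer k with 1 ≤ k ≤ ℓ−1; and ∫∫∫_{[(ℓ−1)c,1]³} g(x,y) g(y,z) g(z,x) dx dy dz = 0. Then I(g) ≥ ((1 − (ℓ−1)c)²/2)·I₀(p). -/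

import Mathlib

open MeasureTheory Real Set Filter

noncomputable section

/-- `I₀(u) = (1/2)[u ln u + (1-u) ln(1-u)]`, with the convention `log 0 = 0`
    giving `I₀(0) = I₀(1) = 0`. -/
def I0 (u : ℝ) : ℝ := (u * Real.log u + (1 - u) * Real.log (1 - u)) / 2

/-- `I₀'(u) = (1/2)[ln u − ln(1−u)]`. -/
def I0d (u : ℝ) : ℝ := (Real.log u - Real.log (1 - u)) / 2

/-- `I₀''(u) = (1/2)[1/u + 1/(1−u)]`. -/
def I0dd (u : ℝ) : ℝ := (1 / u + 1 / (1 - u)) / 2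

/-- A graphon: a measurable, symmetric function `[0,1]² → [0,1]`
    (here defined on all of `ℝ²`, with values used only on `[0,1]²`). -/
def IsGraphon (g : ℝ → ℝ → ℝ) : Prop :=
  Measurable (Function.uncurry g) ∧ (∀ x y, g x y = g y x) ∧ ∀ x y, g x y ∈ Icc (0 : ℝ) 1

/-- The edge density `e(g) = ∫₀¹∫₀¹ g(x,y) dx dy`. -/
def edgeDensity (g : ℝ → ℝ → ℝ) : ℝ :=
  ∫ x in Icc (0 : ℝ) 1, ∫ y in Icc (0 : ℝ) 1, g x y

/-- The triangle density `t(g) = ∫₀¹∫₀¹∫₀¹ g(x,y) g(y,z) g(z,x) dx dy dz`. -/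
def triangleDensity (g : ℝ → ℝ → ℝ) : ℝ :=
  ∫ x in Icc (0 : ℝ) 1, ∫ y in Icc (0 : ℝ) 1, ∫ z in Icc (0 : ℝ) 1, g x y * g y z * g z x

/-- The rate function `I(g) = ∫₀¹∫₀¹ I₀(g(x,y)) dx dy`. -/
def rate (g : ℝ → ℝ → ℝ) : ℝ :=
  ∫ x in Icc (0 : ℝ) 1, ∫ y in Icc (0 : ℝ) 1, I0 (g x y)

/-- Lebesgue measure restricted to `[0,1]`. -/
def unitMeasure : Measure ℝ := volume.restrict (Icc (0 : ℝ) 1)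

/-- Two graphons are equivalent if they agree a.e. after composing with
    measure-preserving maps of `[0,1]`. -/
def GraphonEquiv (f g : ℝ → ℝ → ℝ) : Prop :=
  ∃ σ σ' : ℝ → ℝ, MeasurePreserving σ unitMeasure unitMeasure ∧
    MeasurePreserving σ' unitMeasure unitMeasure ∧
    ∀ᵐ p ∂(unitMeasure.prod unitMeasure), f (σ p.1) (σ p.2) = g (σ' p.1) (σ' p.2)

end


open Function

lemma I0_zero : I0 0 = 0 := by simp [I0]
lemma I0_one : I0 1 = 0 := by simp [I0]

lemma I0_continuous : Continuous I0 := by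
  unfold I0
  exact ((Real.continuous_mul_log.add
    (Real.continuous_mul_log.comp (continuous_const.sub continuous_id))).div_const 2)

lemma I0_convexOn : ConvexOn ℝ (Icc (0:ℝ) 1) I0 := by
  have h1 : ConvexOn ℝ (Icc (0:ℝ) 1) (fun u : ℝ => u * Real.log u) :=
    Real.convexOn_mul_log.subset (fun u hu => hu.1) (convex_Icc 0 1)
  have A : ℝ →ᵃ[ℝ] ℝ := AffineMap.lineMap (1:ℝ) (0:ℝ)
  have h2 : ConvexOn ℝ (Icc (0:ℝ) 1) (fun u : ℝ => (1-u) * Real.log (1-u)) := by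
    have := Real.convexOn_mul_log.comp_affineMap (AffineMap.lineMap (1:ℝ) (0:ℝ))
    have heq : (fun u : ℝ => (1-u) * Real.log (1-u)) =
        (fun x : ℝ => x * Real.log x) ∘ (AffineMap.lineMap (1:ℝ) (0:ℝ)) := by
      funext u
      simp [AffineMap.lineMap_apply]
      ring_nf
    rw [heq]
    refine this.subset (fun u hu => ?_) (convex_Icc 0 1)
    simp [AffineMap.lineMap_apply]
    linarith [hu.2]
  have := (h1.add h2).smul (c := (1:ℝ)/2) (by norm_num)
  have heq : I0 = fun u => ((1:ℝ)/2) • ((fun u : ℝ => u * Real.log u) u + (fun u : ℝ => (1-u) * Real.log (1-u)) u) := by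
    funext u; simp [I0]; ring
  rw [heq]; exact this

lemma I0_smul_le {u t : ℝ} (hu : u ∈ Icc (0:ℝ) 1) (ht : t ∈ Icc (0:ℝ) 1) :
    I0 (t * u) ≤ t * I0 u := by
  have h := I0_convexOn.2 hu (show (0:ℝ) ∈ Icc (0:ℝ) 1 by simp)
    ht.1 (by linarith [ht.2] : (0:ℝ) ≤ 1 - t) (by ring)
  simpa [I0_zero, smul_eq_mul] using h

lemma abs_I0_le_one {u : ℝ} (hu : u ∈ Icc (0:ℝ) 1) : |I0 u| ≤ 1 := by
  have key : ∀ x : ℝ, x ∈ Icc (0:ℝ) 1 → |x * Real.log x| ≤ 1 := by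
    intro x hx
    rcases eq_or_lt_of_le hx.1 with h0 | h0
    · simp [← h0]
    · have hlog : Real.log x ≤ 0 := Real.log_nonpos h0.le hx.2
      have : x * Real.log x ≤ 0 := mul_nonpos_of_nonneg_of_nonpos (by linarith) hlog
      rw [abs_of_nonpos this]
      have h1 : Real.log x⁻¹ ≤ x⁻¹ - 1 := Real.log_le_sub_one_of_pos (by positivity)
      have h2 : -(x * Real.log x) = x * Real.log x⁻¹ := by rw [Real.log_inv]; ring
      rw [h2]
      calc x * Real.log x⁻¹ ≤ x * (x⁻¹ - 1) := by
            apply mul_le_mul_of_nonneg_left h1 (by linarith)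
        _ = 1 - x := by field_simp
        _ ≤ 1 := by linarith
  have k1 := key u hu
  have k2 := key (1-u) (by constructor <;> [linarith [hu.2]; linarith [hu.1]])
  unfold I0
  rw [abs_div]
  have h2 : |u * Real.log u + (1-u) * Real.log (1-u)| ≤ 2 :=
    (abs_add_le _ _).trans (by linarith)
  rw [show |(2:ℝ)| = 2 by norm_num]
  linarith


lemma integrable_bdd {α : Type*} [MeasurableSpace α] {μ : Measure α} [IsFiniteMeasure μ]
    {F : α → ℝ} (hF : Measurable F) (C : ℝ) (h : ∀ x, |F x| ≤ C) : Integrable F μ :=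
  (integrable_const C).mono' hF.aestronglyMeasurable
    (Eventually.of_forall (by simpa [Real.norm_eq_abs] using h))

set_option maxHeartbeats 2000000 in
lemma corner_bound {g : ℝ → ℝ → ℝ} (hgm : Measurable (Function.uncurry g))
    (hgs : ∀ x y, g x y = g y x) (hgb : ∀ x y, g x y ∈ Icc (0:ℝ) 1)
    {a : ℝ} (ha0 : 0 ≤ a) (ha1 : a < 1)
    (htri : ∫ x in Icc a 1, ∫ y in Icc a 1, ∫ z in Icc a 1, g x y * g y z * g z x = 0) :
    (1-a)^2/2 * I0 ((∫ q, g q.1 q.2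
        ∂((volume.restrict (Icc a 1)).prod (volume.restrict (Icc a 1)))) / ((1-a)^2/2))
      ≤ ∫ q, I0 (g q.1 q.2)
        ∂((volume.restrict (Icc a 1)).prod (volume.restrict (Icc a 1))) := by
  set s : ℝ := 1 - a with hs_def
  have hs0 : 0 < s := by simp [hs_def]; linarith
  have hs1 : s ≤ 1 := by simp [hs_def]; linarith
  set μ : Measure ℝ := volume.restrict (Icc a 1) with hμ_def
  haveI : IsFiniteMeasure μ := ⟨by
    rw [hμ_def, Measure.restrict_apply_univ, Real.volume_Icc]; exact ENNReal.ofReal_lt_top⟩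
  set pr : Measure (ℝ × ℝ) := μ.prod μ with hpr_def
  have hμuniv : (μ univ).toReal = s := by
    rw [hμ_def, Measure.restrict_apply_univ, Real.volume_Icc, ENNReal.toReal_ofReal hs0.le]
  -- basic facts about g
  have hgb0 : ∀ x y, 0 ≤ g x y := fun x y => (hgb x y).1
  have hgb1 : ∀ x y, g x y ≤ 1 := fun x y => (hgb x y).2
  have hgabs : ∀ x y, |g x y| ≤ 1 := fun x y => abs_le.mpr ⟨by linarith [hgb0 x y], hgb1 x y⟩
  have mg2 : Measurable (fun q : ℝ × ℝ => g q.1 q.2) := hgm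
  -- bounded integral helper
  have bdd_int : ∀ (f : ℝ → ℝ) (C : ℝ), 0 ≤ C → Integrable f μ → (∀ z, |f z| ≤ C) →
      |∫ z, f z ∂μ| ≤ C := by
    intro f C hC hint hf
    calc |∫ z, f z ∂μ| ≤ ∫ z, |f z| ∂μ := by
          simpa [Real.norm_eq_abs] using norm_integral_le_integral_norm (μ := μ) f
      _ ≤ ∫ _, C ∂μ := integral_mono hint.abs (integrable_const C) hf
      _ = (μ univ).toReal * C := by rw [integral_const, smul_eq_mul, measureReal_def]
      _ ≤ C := by rw [hμuniv]; nlinarith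
  -- triangle-free a.e.
  have mT : Measurable (fun p : (ℝ × ℝ) × ℝ => g p.1.1 p.1.2 * g p.1.2 p.2 * g p.2 p.1.1) := by
    exact ((hgm.comp ((measurable_fst.fst).prodMk (measurable_fst.snd))).mul
      (hgm.comp ((measurable_fst.snd).prodMk measurable_snd))).mul
      (hgm.comp (measurable_snd.prodMk (measurable_fst.fst)))
  have habc : ∀ u v w : ℝ, |u| ≤ 1 → |v| ≤ 1 → |w| ≤ 1 → |u * v * w| ≤ 1 := by
    intro u v w h1 h2 h3
    rw [abs_mul, abs_mul]
    have h4 : |u| * |v| ≤ 1 := by nlinarith [abs_nonneg u, abs_nonneg v]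
    nlinarith [abs_nonneg u, abs_nonneg v, abs_nonneg w, mul_nonneg (abs_nonneg u) (abs_nonneg v)]
  have hTnn : ∀ x y z : ℝ, 0 ≤ g x y * g y z * g z x := fun x y z =>
    mul_nonneg (mul_nonneg (hgb0 x y) (hgb0 y z)) (hgb0 z x)
  have intT : ∀ x y : ℝ, Integrable (fun z => g x y * g y z * g z x) μ := by
    intro x y
    have hm : Measurable (fun z => g x y * g y z * g z x) :=
      mT.comp (measurable_prodMk_left : Measurable (Prod.mk ((x, y) : ℝ × ℝ)))
    exact integrable_bdd hm 1
      (fun z => habc _ _ _ (hgabs x y) (hgabs y z) (hgabs z x))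
  have mF2 : Measurable (fun q : ℝ × ℝ => ∫ z, g q.1 q.2 * g q.2 z * g z q.1 ∂μ) :=
    mT.stronglyMeasurable.integral_prod_right'.measurable
  have hF2nn : ∀ q : ℝ × ℝ, 0 ≤ ∫ z, g q.1 q.2 * g q.2 z * g z q.1 ∂μ := by
    intro q
    exact integral_nonneg (fun z => hTnn q.1 q.2 z)
  have hF2bd : ∀ q : ℝ × ℝ, |∫ z, g q.1 q.2 * g q.2 z * g z q.1 ∂μ| ≤ 1 := by
    intro q
    exact bdd_int _ 1 one_pos.le (intT q.1 q.2)
      (fun z => habc _ _ _ (hgabs q.1 q.2) (hgabs q.2 z) (hgabs z q.1))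
  have intF2x : ∀ x : ℝ, Integrable (fun y => ∫ z, g x y * g y z * g z x ∂μ) μ := by
    intro x
    have hm : Measurable (fun y => ∫ z, g x y * g y z * g z x ∂μ) :=
      mF2.comp (measurable_prodMk_left : Measurable (Prod.mk x))
    exact integrable_bdd hm 1 (fun y => hF2bd (x, y))
  have mF1 : Measurable (fun x : ℝ => ∫ y, ∫ z, g x y * g y z * g z x ∂μ ∂μ) :=
    mF2.stronglyMeasurable.integral_prod_right'.measurable
  have intF1 : Integrable (fun x : ℝ => ∫ y, ∫ z, g x y * g y z * g z x ∂μ ∂μ) μ :=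
    integrable_bdd mF1 1 (fun x => bdd_int _ 1 one_pos.le (intF2x x) (fun y => hF2bd (x, y)))
  have tri : ∀ᵐ x ∂μ, ∀ᵐ y ∂μ, ∀ᵐ z ∂μ, g x y * g y z * g z x = 0 := by
    have h1 : (fun x => ∫ y, ∫ z, g x y * g y z * g z x ∂μ ∂μ) =ᵐ[μ] 0 := by
      rw [← integral_eq_zero_iff_of_nonneg (fun x => integral_nonneg (fun y => hF2nn (x, y)))
        intF1]
      exact htri
    filter_upwards [h1] with x hx
    have h2 : (fun y => ∫ z, g x y * g y z * g z x ∂μ) =ᵐ[μ] 0 :=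
      (integral_eq_zero_iff_of_nonneg (fun y => hF2nn (x, y)) (intF2x x)).mp (by simpa using hx)
    filter_upwards [h2] with y hy
    have h3 := (integral_eq_zero_iff_of_nonneg (fun z => hTnn x y z) (intT x y)).mp
      (by simpa using hy)
    filter_upwards [h3] with z hz using hz
  -- support set and degree function
  set S : Set (ℝ × ℝ) := {q | 0 < g q.1 q.2} with hS_def
  have hS : MeasurableSet S := measurableSet_lt measurable_const mg2
  set W : ℝ → ℝ → ℝ := fun x y => if 0 < g x y then 1 else 0 with hW_def
  have hWind : (fun q : ℝ × ℝ => W q.1 q.2) = S.indicator 1 := by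
    funext q
    by_cases h : 0 < g q.1 q.2 <;> simp [hW_def, h, hS_def, Set.indicator]
  have mW2 : Measurable (fun q : ℝ × ℝ => W q.1 q.2) := by
    rw [hWind]; exact measurable_const.indicator hS
  have hW01 : ∀ x y, W x y = 0 ∨ W x y = 1 := by
    intro x y; by_cases h : 0 < g x y <;> simp [hW_def, h]
  have hWnn : ∀ x y, 0 ≤ W x y := by
    intro x y; rcases hW01 x y with h | h <;> rw [h] <;> norm_num
  have hWle1 : ∀ x y, W x y ≤ 1 := by
    intro x y; rcases hW01 x y with h | h <;> rw [h] <;> norm_num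
  have hWabs : ∀ x y, |W x y| ≤ 1 := fun x y => abs_le.mpr ⟨by linarith [hWnn x y], hWle1 x y⟩
  have hWsymm : ∀ x y, W x y = W y x := by
    intro x y; simp only [hW_def, hgs x y]
  have intW : ∀ x, Integrable (fun y => W x y) μ := by
    intro x
    have hm : Measurable (fun y => W x y) :=
      mW2.comp (measurable_prodMk_left : Measurable (Prod.mk x))
    exact integrable_bdd hm 1 (fun y => hWabs x y)
  set D : ℝ → ℝ := fun x => ∫ y, W x y ∂μ with hD_def
  have mD : Measurable D := mW2.stronglyMeasurable.integral_prod_right'.measurable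
  have hDnn : ∀ x, 0 ≤ D x := fun x => integral_nonneg (fun y => hWnn x y)
  have hDle : ∀ x, D x ≤ s := by
    intro x
    calc D x ≤ ∫ _, (1:ℝ) ∂μ := integral_mono (intW x) (integrable_const 1) (fun y => hWle1 x y)
      _ = s := by rw [integral_const, smul_eq_mul, measureReal_def, hμuniv, mul_one]
  have hDabs : ∀ x, |D x| ≤ 1 := fun x => abs_le.mpr ⟨by linarith [hDnn x], (hDle x).trans hs1⟩
  have intD : Integrable D μ := integrable_bdd mD 1 hDabs
  -- key degree bound from triangle-freeness
  have hDD : ∀ᵐ x ∂μ, ∀ᵐ y ∂μ, 0 < g x y → D x + D y ≤ s := by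
    filter_upwards [tri] with x hx
    filter_upwards [hx] with y hy
    intro hpos
    have hz : ∀ᵐ z ∂μ, W x z + W y z ≤ 1 := by
      filter_upwards [hy] with z hzz
      by_cases h1 : 0 < g x z
      · by_cases h2 : 0 < g y z
        · exfalso
          have h3 : 0 < g z x := by rw [← hgs x z]; exact h1
          have : 0 < g x y * g y z * g z x := by positivity
          rw [hzz] at this; exact lt_irrefl 0 this
        · simp [hW_def, h1, h2]
      · have := hWle1 y z
        simp only [hW_def, h1, if_false]
        simpa using this
    calc D x + D y = ∫ z, (W x z + W y z) ∂μ := (integral_add (intW x) (intW y)).symm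
      _ ≤ ∫ _, (1:ℝ) ∂μ := integral_mono_ae ((intW x).add (intW y)) (integrable_const 1) hz
      _ = s := by rw [integral_const, smul_eq_mul, measureReal_def, hμuniv, mul_one]
  -- Mantel bound
  set A : ℝ := ∫ x, D x ∂μ with hA_def
  set Q : ℝ := ∫ x, (D x)^2 ∂μ with hQ_def
  have hAnn : 0 ≤ A := integral_nonneg hDnn
  have hQnn : 0 ≤ Q := integral_nonneg (fun x => sq_nonneg (D x))
  have mWD : Measurable (fun q : ℝ × ℝ => W q.1 q.2 * (D q.1 + D q.2)) :=
    mW2.mul ((mD.comp measurable_fst).add (mD.comp measurable_snd))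
  have intWDx : ∀ x, Integrable (fun y => W x y * (D x + D y)) μ := by
    intro x
    have hm : Measurable (fun y => W x y * (D x + D y)) :=
      mWD.comp (measurable_prodMk_left : Measurable (Prod.mk x))
    refine integrable_bdd hm 2 (fun y => ?_)
    rw [abs_mul]
    have h1 := hWabs x y
    have h2 : |D x + D y| ≤ 2 := (abs_add_le _ _).trans (by linarith [hDabs x, hDabs y])
    nlinarith [abs_nonneg (W x y), abs_nonneg (D x + D y)]
  have intWDy : ∀ x, Integrable (fun y => W x y * D y) μ := by
    intro x
    have hm : Measurable (fun y => W x y * D y) :=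
      (mW2.mul (mD.comp measurable_snd)).comp (measurable_prodMk_left : Measurable (Prod.mk x))
    refine integrable_bdd hm 1 (fun y => ?_)
    rw [abs_mul]
    nlinarith [hWabs x y, hDabs y, abs_nonneg (W x y), abs_nonneg (D y)]
  have inner_eq : ∀ x, ∫ y, W x y * (D x + D y) ∂μ = D x * D x + ∫ y, W x y * D y ∂μ := by
    intro x
    have h1 : (fun y => W x y * (D x + D y)) = fun y => W x y * D x + W x y * D y := by
      funext y; ring
    rw [h1, integral_add ((intW x).mul_const (D x)) (intWDy x), integral_mul_const]
  have hWDle : ∀ᵐ x ∂μ, ∀ᵐ y ∂μ, W x y * (D x + D y) ≤ s * W x y := by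
    filter_upwards [hDD] with x hx
    filter_upwards [hx] with y hy
    by_cases h : 0 < g x y
    · have := hy h
      simp only [hW_def, h, if_true, mul_one, one_mul]
      linarith
    · simp [hW_def, h]
  have mInner : Measurable (fun x => ∫ y, W x y * (D x + D y) ∂μ) :=
    mWD.stronglyMeasurable.integral_prod_right'.measurable
  have intInner : Integrable (fun x => ∫ y, W x y * (D x + D y) ∂μ) μ :=
    integrable_bdd mInner 2 (fun x => bdd_int _ 2 (by norm_num) (intWDx x)
      (fun y => by
        rw [abs_mul]
        have h2 : |D x + D y| ≤ 2 := (abs_add_le _ _).trans (by linarith [hDabs x, hDabs y])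
        nlinarith [hWabs x y, abs_nonneg (W x y), abs_nonneg (D x + D y)]))
  have mInner2 : Measurable (fun x => ∫ y, W x y * D y ∂μ) :=
    (mW2.mul (mD.comp measurable_snd)).stronglyMeasurable.integral_prod_right'.measurable
  have intInner2 : Integrable (fun x => ∫ y, W x y * D y ∂μ) μ :=
    integrable_bdd mInner2 1 (fun x => bdd_int _ 1 (by norm_num) (intWDy x)
      (fun y => by
        rw [abs_mul]
        nlinarith [hWabs x y, hDabs y, abs_nonneg (W x y), abs_nonneg (D y)]))
  have hT2le : ∫ x, ∫ y, W x y * (D x + D y) ∂μ ∂μ ≤ s * A := by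
    have step1 : ∫ x, ∫ y, W x y * (D x + D y) ∂μ ∂μ ≤ ∫ x, s * D x ∂μ := by
      apply integral_mono_ae intInner (intD.const_mul s)
      filter_upwards [hWDle] with x hx
      calc ∫ y, W x y * (D x + D y) ∂μ ≤ ∫ y, s * W x y ∂μ :=
            integral_mono_ae (intWDx x) ((intW x).const_mul s) hx
        _ = s * D x := by rw [integral_const_mul]
    rw [integral_const_mul] at step1
    exact step1
  have hswap : ∫ x, ∫ y, W x y * D y ∂μ ∂μ = Q := by
    have hint : Integrable (uncurry (fun x y => W x y * D y)) pr := by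
      apply integrable_bdd (μ := pr) (mW2.mul (mD.comp measurable_snd)) 1
      intro q
      simp only [Pi.mul_apply, Function.comp_apply]
      rw [abs_mul]
      nlinarith [hWabs q.1 q.2, hDabs q.2, abs_nonneg (W q.1 q.2), abs_nonneg (D q.2)]
    rw [integral_integral_swap hint]
    have h1 : ∀ y, ∫ x, W x y * D y ∂μ = (D y)^2 := by
      intro y
      rw [integral_mul_const]
      have h2 : ∫ x, W x y ∂μ = D y := by
        have h3 : (fun x => W x y) = (fun x => W y x) := by
          funext x; exact hWsymm x y
        rw [h3]
      rw [h2, sq]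
    simp_rw [h1]
    rfl
  have mantel : A ≤ s^2/2 := by
    have hT2eq : ∫ x, ∫ y, W x y * (D x + D y) ∂μ ∂μ = 2 * Q := by
      calc ∫ x, ∫ y, W x y * (D x + D y) ∂μ ∂μ
          = ∫ x, (D x * D x + ∫ y, W x y * D y ∂μ) ∂μ := by
            apply integral_congr_ae
            exact Eventually.of_forall (fun x => inner_eq x)
        _ = (∫ x, D x * D x ∂μ) + ∫ x, ∫ y, W x y * D y ∂μ ∂μ := by
            apply integral_add _ intInner2
            have : (fun x => D x * D x) = fun x => (D x)^2 := by funext x; rw [sq]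
            rw [this]
            exact integrable_bdd (mD.pow measurable_const) 1 (fun x => by
              rw [abs_pow]
              nlinarith [hDabs x, abs_nonneg (D x)])
        _ = Q + Q := by
            rw [hswap]
            congr 1
            apply integral_congr_ae
            exact Eventually.of_forall (fun x => by simp [sq])
        _ = 2 * Q := by ring
    have h2Q : 2 * Q ≤ s * A := by rw [← hT2eq]; exact hT2le
    -- Cauchy-Schwarz via expansion of (D x - D y)^2
    have intDsq : Integrable (fun x => (D x)^2) μ :=
      integrable_bdd (mD.pow measurable_const) 1 (fun x => by
        rw [abs_pow]; nlinarith [hDabs x, abs_nonneg (D x)])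
    have hCS : A^2 ≤ s * Q := by
      have inner2 : ∀ x, ∫ y, (D x - D y)^2 ∂μ = s * (D x)^2 - (2 * A) * D x + Q := by
        intro x
        have e0 : ∫ y, (D x - D y)^2 ∂μ
            = ∫ y, ((D x)^2 + (-(2 * D x) * D y + (D y)^2)) ∂μ := by
          apply integral_congr_ae
          filter_upwards with y
          ring
        have e1 : ∫ y, ((D x)^2 + (-(2 * D x) * D y + (D y)^2)) ∂μ
            = (∫ _, (D x)^2 ∂μ) + ∫ y, (-(2 * D x) * D y + (D y)^2) ∂μ :=
          integral_add (integrable_const _) ((intD.const_mul _).add intDsq)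
        have e2 : ∫ y, (-(2 * D x) * D y + (D y)^2) ∂μ
            = (∫ y, -(2 * D x) * D y ∂μ) + ∫ y, (D y)^2 ∂μ :=
          integral_add (intD.const_mul _) intDsq
        rw [e0, e1, e2, integral_const_mul, integral_const, smul_eq_mul, measureReal_def, hμuniv,
          ← hQ_def, ← hA_def]
        ring
      have houter : ∫ x, ∫ y, (D x - D y)^2 ∂μ ∂μ = 2 * (s * Q) - 2 * A^2 := by
        have e0 : ∫ x, ∫ y, (D x - D y)^2 ∂μ ∂μ
            = ∫ x, (s * (D x)^2 - (2 * A) * D x + Q) ∂μ := by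
          apply integral_congr_ae
          exact Eventually.of_forall (fun x => inner2 x)
        have e1 : ∫ x, (s * (D x)^2 - (2 * A) * D x + Q) ∂μ
            = (∫ x, (s * (D x)^2 - (2 * A) * D x) ∂μ) + ∫ _, Q ∂μ :=
          integral_add ((intDsq.const_mul s).sub (intD.const_mul _)) (integrable_const _)
        have e2 : ∫ x, (s * (D x)^2 - (2 * A) * D x) ∂μ
            = (∫ x, s * (D x)^2 ∂μ) - ∫ x, (2 * A) * D x ∂μ :=
          integral_sub (intDsq.const_mul s) (intD.const_mul _)
        rw [e0, e1, e2, integral_const_mul, integral_const_mul, integral_const, smul_eq_mul,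
          measureReal_def, hμuniv, ← hQ_def, ← hA_def]
        ring
      have hnn : 0 ≤ ∫ x, ∫ y, (D x - D y)^2 ∂μ ∂μ :=
        integral_nonneg (fun x => integral_nonneg (fun y => sq_nonneg _))
      rw [houter] at hnn
      linarith
    by_cases hA0 : A = 0
    · rw [hA0]; positivity
    · have hApos : 0 < A := lt_of_le_of_ne hAnn (Ne.symm hA0)
      have h3 : 2 * A^2 ≤ s^2 * A := by nlinarith [mul_le_mul_of_nonneg_left h2Q hs0.le]
      have h4 : 2 * A ≤ s^2 := le_of_mul_le_mul_right (by nlinarith [h3]) hApos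
      clear_value A Q
      set t : ℝ := s^2 with ht
      linarith
  -- Jensen step
  have hA_meas : A = (pr S).toReal := by
    have hint : Integrable (uncurry W) pr :=
      integrable_bdd (μ := pr) mW2 1 (fun q => hWabs q.1 q.2)
    have h1 : A = ∫ q, W q.1 q.2 ∂pr := by
      rw [hA_def]
      simp only [hD_def]
      rw [hpr_def]
      exact integral_integral hint
    rw [h1, hWind, integral_indicator_one hS, measureReal_def]
  set m : ℝ := ∫ q, g q.1 q.2 ∂pr with hm_def
  have int_g : Integrable (fun q : ℝ × ℝ => g q.1 q.2) pr :=
    integrable_bdd mg2 1 (fun q => hgabs q.1 q.2)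
  have mI0g : Measurable (fun q : ℝ × ℝ => I0 (g q.1 q.2)) :=
    I0_continuous.measurable.comp mg2
  have int_I0g : Integrable (fun q : ℝ × ℝ => I0 (g q.1 q.2)) pr :=
    integrable_bdd mI0g 1 (fun q => abs_I0_le_one (hgb q.1 q.2))
  have hg_ind : (fun q : ℝ × ℝ => g q.1 q.2) = S.indicator (fun q => g q.1 q.2) := by
    funext q
    by_cases h : q ∈ S
    · rw [Set.indicator_of_mem h]
    · rw [Set.indicator_of_notMem h]
      have h2 : ¬ 0 < g q.1 q.2 := h
      linarith [hgb0 q.1 q.2, not_lt.mp h2]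
  have hI0_ind : (fun q : ℝ × ℝ => I0 (g q.1 q.2)) =
      S.indicator (fun q => I0 (g q.1 q.2)) := by
    funext q
    by_cases h : q ∈ S
    · rw [Set.indicator_of_mem h]
    · rw [Set.indicator_of_notMem h]
      have h2 : g q.1 q.2 = 0 := le_antisymm (not_lt.mp h) (hgb0 q.1 q.2)
      rw [h2, I0_zero]
  have hm_restrict : m = ∫ q in S, g q.1 q.2 ∂pr := by
    conv_lhs => rw [hm_def, hg_ind]
    rw [integral_indicator hS]
  have hR_restrict : ∫ q, I0 (g q.1 q.2) ∂pr = ∫ q in S, I0 (g q.1 q.2) ∂pr := by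
    conv_lhs => rw [hI0_ind]
    rw [integral_indicator hS]
  by_cases hA0 : A = 0
  · have hprS : pr S = 0 := by
      have hfin : pr S ≠ ⊤ := (measure_lt_top pr S).ne
      rw [hA_meas] at hA0
      exact (ENNReal.toReal_eq_zero_iff _).mp hA0 |>.resolve_right hfin
    have hrz : pr.restrict S = 0 := Measure.restrict_eq_zero.mpr hprS
    have hm0 : m = 0 := by rw [hm_restrict, hrz, integral_zero_measure]
    have hR0 : ∫ q, I0 (g q.1 q.2) ∂pr = 0 := by
      rw [hR_restrict, hrz, integral_zero_measure]
    rw [hR0, hm0, zero_div, I0_zero, mul_zero]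
  · have hApos : 0 < A := lt_of_le_of_ne hAnn (Ne.symm hA0)
    have hprS_ne : pr S ≠ 0 := by
      intro h
      exact hA0 (by rw [hA_meas, h, ENNReal.toReal_zero])
    haveI : IsFiniteMeasure (pr.restrict S) :=
      ⟨by rw [Measure.restrict_apply_univ]; exact measure_lt_top pr S⟩
    haveI : NeZero (pr.restrict S) :=
      ⟨by rw [← Measure.measure_univ_ne_zero, Measure.restrict_apply_univ]; exact hprS_ne⟩
    have hsub : (pr.restrict S) univ = pr S := Measure.restrict_apply_univ S
    have jensen := I0_convexOn.map_average_le I0_continuous.continuousOn isClosed_Icc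
      (Eventually.of_forall (fun q : ℝ × ℝ => hgb q.1 q.2)) int_g.restrict
      (show Integrable (I0 ∘ (fun q : ℝ × ℝ => g q.1 q.2)) (pr.restrict S) from
        int_I0g.restrict)
    rw [average_eq, average_eq, measureReal_def, hsub, ← hA_meas, smul_eq_mul, smul_eq_mul] at jensen
    have hmA : A⁻¹ * (∫ q in S, g q.1 q.2 ∂pr) = m / A := by
      rw [← hm_restrict, div_eq_inv_mul]
    rw [hmA] at jensen
    have key : A * I0 (m / A) ≤ ∫ q, I0 (g q.1 q.2) ∂pr := by
      rw [hR_restrict]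
      calc A * I0 (m / A) ≤ A * (A⁻¹ * ∫ q in S, I0 (g q.1 q.2) ∂pr) :=
            mul_le_mul_of_nonneg_left jensen hApos.le
        _ = ∫ q in S, I0 (g q.1 q.2) ∂pr := by field_simp
    have hm0 : 0 ≤ m := integral_nonneg (fun q => hgb0 q.1 q.2)
    have hmA_le : m ≤ A := by
      rw [hm_restrict, hA_meas, ← hsub]
      calc ∫ q in S, g q.1 q.2 ∂pr ≤ ∫ _ in S, (1:ℝ) ∂pr :=
            integral_mono int_g.restrict (integrable_const 1) (fun q => hgb1 q.1 q.2)
        _ = ((pr.restrict S) univ).toReal := by rw [integral_const, smul_eq_mul, mul_one, measureReal_def]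
    set B : ℝ := s^2/2 with hB_def
    have hB0 : 0 < B := by rw [hB_def]; positivity
    have hu : m / A ∈ Icc (0:ℝ) 1 :=
      ⟨div_nonneg hm0 hApos.le, (div_le_one hApos).mpr hmA_le⟩
    have ht : A / B ∈ Icc (0:ℝ) 1 :=
      ⟨div_nonneg hAnn hB0.le, (div_le_one hB0).mpr mantel⟩
    have hscale := I0_smul_le hu ht
    have hAne : A ≠ 0 := hApos.ne'
    have hBne : B ≠ 0 := hB0.ne'
    have htu : (A / B) * (m / A) = m / B := by
      field_simp
    rw [htu] at hscale
    have final : B * I0 (m / B) ≤ A * I0 (m / A) := by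
      calc B * I0 (m / B) ≤ B * ((A / B) * I0 (m / A)) :=
            mul_le_mul_of_nonneg_left hscale hB0.le
        _ = A * I0 (m / A) := by
            field_simp
    exact final.trans key


noncomputable section
def blk (c : ℝ) (k : ℕ) : Set ℝ := Ioo (((k:ℝ)-1)*c) ((k:ℝ)*c)
def blks (l : ℕ) (c : ℝ) : Set (ℝ×ℝ) := ⋃ k ∈ Finset.Icc 1 (l-1), (blk c k) ×ˢ (blk c k)
end

lemma blks_symm {l : ℕ} {c x y : ℝ} (h : (x, y) ∈ blks l c) : (y, x) ∈ blks l c := by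
  simp only [blks, Set.mem_iUnion, Set.mem_prod] at h ⊢
  obtain ⟨k, hk, h1, h2⟩ := h
  exact ⟨k, hk, h2, h1⟩

lemma classify_aux (l : ℕ) (hl : 2 ≤ l) {c v x y : ℝ} (hc0 : 0 < c)
    (hx0 : 0 ≤ x) (hy : y ∈ Icc (0:ℝ) 1)
    (hxa : x < ((l:ℝ)-1)*c)
    (hxM : ∀ k : ℕ, k ≤ l - 1 → x ≠ (k:ℝ)*c)
    (hyM : ∀ k : ℕ, k ≤ l - 1 → y ≠ (k:ℝ)*c)
    (H1 : ∀ k : ℕ, 1 ≤ k → k ≤ l - 1 →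
      ((x < (k:ℝ)*c ∧ (k:ℝ)*c < y) ∨ (y < (k:ℝ)*c ∧ (k:ℝ)*c < x)) → v = 1)
    (H2 : ∀ k : ℕ, 1 ≤ k → k ≤ l - 1 →
      (((k:ℝ)-1)*c < x ∧ x < (k:ℝ)*c ∧ ((k:ℝ)-1)*c < y ∧ y < (k:ℝ)*c) → v = 0) :
    (v = 0 ∧ (x, y) ∈ blks l c) ∨ v = 1 := by
  set k0 := Nat.floor (x / c) with hk0_def
  have hxc : 0 ≤ x / c := div_nonneg hx0 hc0.le
  have h1 : (k0:ℝ) * c ≤ x := by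
    have h := Nat.floor_le hxc
    calc (k0:ℝ) * c ≤ (x/c) * c := mul_le_mul_of_nonneg_right h hc0.le
      _ = x := div_mul_cancel₀ x hc0.ne'
  have h2 : x < ((k0:ℝ) + 1) * c := by
    have h := Nat.lt_floor_add_one (x/c)
    have h' : x / c < (k0:ℝ) + 1 := by exact_mod_cast h
    calc x = (x/c) * c := (div_mul_cancel₀ x hc0.ne').symm
      _ < ((k0:ℝ) + 1) * c := mul_lt_mul_of_pos_right h' hc0
  have hcastl : ((l-1:ℕ):ℝ) = (l:ℝ) - 1 := by
    have : (1:ℕ) ≤ l := by omega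
    push_cast [Nat.cast_sub this]
    ring
  have hk0lt : k0 < l - 1 := by
    have hx' : x / c < (l:ℝ) - 1 := by rw [div_lt_iff₀ hc0]; exact hxa
    exact (Nat.floor_lt hxc).mpr (by rw [hcastl]; exact hx')
  have hkle : k0 + 1 ≤ l - 1 := by omega
  have hk1 : 1 ≤ k0 + 1 := by omega
  have hcastk : ((k0 + 1 : ℕ):ℝ) = (k0:ℝ) + 1 := by push_cast; ring
  have hx_lb : (((k0+1:ℕ):ℝ) - 1) * c < x := by
    rw [hcastk]
    have hne : x ≠ (k0:ℝ) * c := hxM k0 (by omega)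
    have : (k0:ℝ) * c < x := lt_of_le_of_ne h1 (Ne.symm hne)
    linarith
  have hx_ub : x < ((k0+1:ℕ):ℝ) * c := by rw [hcastk]; exact h2
  rcases lt_trichotomy y ((k0:ℝ) * c) with hy1 | hy1 | hy1
  · have hk0pos : 1 ≤ k0 := by
      by_contra h
      have hz : k0 = 0 := by omega
      rw [hz] at hy1
      simp at hy1
      linarith [hy.1]
    right
    refine H1 k0 hk0pos (by omega) (Or.inr ⟨hy1, ?_⟩)
    exact lt_of_le_of_ne h1 (Ne.symm (hxM k0 (by omega)))
  · exact absurd hy1 (hyM k0 (by omega))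
  · rcases lt_trichotomy y (((k0+1:ℕ):ℝ) * c) with hy2 | hy2 | hy2
    · left
      constructor
      · refine H2 (k0+1) hk1 hkle ⟨hx_lb, hx_ub, ?_, hy2⟩
        rw [hcastk]; linarith
      · simp only [blks, Set.mem_iUnion, Set.mem_prod]
        refine ⟨k0+1, by simp [Finset.mem_Icc]; omega, ?_, ?_⟩
        · exact ⟨hx_lb, hx_ub⟩
        · refine ⟨?_, hy2⟩
          rw [hcastk]; linarith
    · exact absurd hy2 (hyM (k0+1) hkle)
    · right
      exact H1 (k0+1) hk1 hkle (Or.inl ⟨hx_ub, hy2⟩)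

lemma classify (l : ℕ) (hl : 2 ≤ l) {c v x y : ℝ} (hc0 : 0 < c)
    (hx : x ∈ Icc (0:ℝ) 1) (hy : y ∈ Icc (0:ℝ) 1)
    (hxM : ∀ k : ℕ, k ≤ l - 1 → x ≠ (k:ℝ)*c)
    (hyM : ∀ k : ℕ, k ≤ l - 1 → y ≠ (k:ℝ)*c)
    (H1 : ∀ k : ℕ, 1 ≤ k → k ≤ l - 1 →
      ((x < (k:ℝ)*c ∧ (k:ℝ)*c < y) ∨ (y < (k:ℝ)*c ∧ (k:ℝ)*c < x)) → v = 1)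
    (H2 : ∀ k : ℕ, 1 ≤ k → k ≤ l - 1 →
      (((k:ℝ)-1)*c < x ∧ x < (k:ℝ)*c ∧ ((k:ℝ)-1)*c < y ∧ y < (k:ℝ)*c) → v = 0) :
    (x ∈ Icc (((l:ℝ)-1)*c) 1 ∧ y ∈ Icc (((l:ℝ)-1)*c) 1) ∨
      (v = 0 ∧ (x, y) ∈ blks l c) ∨ v = 1 := by
  by_cases hxK : x ∈ Icc (((l:ℝ)-1)*c) 1
  · by_cases hyK : y ∈ Icc (((l:ℝ)-1)*c) 1
    · exact Or.inl ⟨hxK, hyK⟩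
    · right
      have hya : y < ((l:ℝ)-1)*c := by
        rcases not_and_or.mp (fun h => hyK ⟨h.1, h.2⟩) with h | h
        · exact not_le.mp h
        · exact absurd hy.2 h
      have h := classify_aux l hl hc0 hy.1 hx hya hyM hxM
        (fun k hk1 hk2 hcond => H1 k hk1 hk2 (Or.symm hcond))
        (fun k hk1 hk2 hcond => H2 k hk1 hk2 ⟨hcond.2.2.1, hcond.2.2.2, hcond.1, hcond.2.1⟩)
      rcases h with ⟨h0, hmem⟩ | h1
      · exact Or.inl ⟨h0, blks_symm hmem⟩
      · exact Or.inr h1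
  · right
    have hxa : x < ((l:ℝ)-1)*c := by
      rcases not_and_or.mp (fun h => hxK ⟨h.1, h.2⟩) with h | h
      · exact not_le.mp h
      · exact absurd hx.2 h
    exact classify_aux l hl hc0 hx.1 hy hxa hxM hyM H1 H2

lemma blks_zero {l : ℕ} {c : ℝ} {g : ℝ → ℝ → ℝ} {x y : ℝ}
    (H2 : ∀ k : ℕ, 1 ≤ k → k ≤ l - 1 →
      (((k:ℝ)-1)*c < x ∧ x < (k:ℝ)*c ∧ ((k:ℝ)-1)*c < y ∧ y < (k:ℝ)*c) → g x y = 0)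
    (h : (x, y) ∈ blks l c) : g x y = 0 := by
  simp only [blks, Set.mem_iUnion, Set.mem_prod, Finset.mem_Icc] at h
  obtain ⟨k, ⟨hk1, hk2⟩, ⟨ha, hb⟩, ⟨hc', hd⟩⟩ := h
  exact H2 k hk1 hk2 ⟨ha, hb, hc', hd⟩

lemma blks_disjoint_corner {l : ℕ} {c : ℝ} (hc0 : 0 < c) {x y : ℝ}
    (h : (x, y) ∈ blks l c) (hx : x ∈ Icc (((l:ℝ)-1)*c) 1) : False := by
  simp only [blks, Set.mem_iUnion, Set.mem_prod, Finset.mem_Icc] at h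
  obtain ⟨k, ⟨hk1, hk2⟩, ⟨ha, hb⟩, _⟩ := h
  have hkr : (k:ℝ) ≤ (l:ℝ) - 1 := by
    have h1 : (k:ℝ) ≤ ((l-1:ℕ):ℝ) := by exact_mod_cast hk2
    have h2 : ((l-1:ℕ):ℝ) ≤ (l:ℝ) - 1 := by
      rcases le_or_gt 1 l with h | h
      · rw [Nat.cast_sub h]; simp
      · interval_cases l <;> simp at hk2 ⊢ <;> omega
    linarith
  have : (k:ℝ) * c ≤ ((l:ℝ)-1) * c := mul_le_mul_of_nonneg_right hkr hc0.le
  linarith [hx.1]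


set_option maxHeartbeats 2000000 in
/-- lower bound `I(g) ≥ ((1−(ℓ−1)c)²/2)·I₀(p)` for graphons of the
    multipartite form on the `ℓ`-th scallop. -/
theorem rate_lower_bound_on_scallop (ℓ : ℕ) (hℓ : 2 ≤ ℓ) (e c p : ℝ)
    (he : e ∈ Icc (1 - 1 / (ℓ : ℝ)) (1 - 1 / ((ℓ : ℝ) + 1)))
    (hc : c = ((ℓ : ℝ) + Real.sqrt ((ℓ : ℝ) * ((ℓ : ℝ) - e * ((ℓ : ℝ) + 1)))) /
      ((ℓ : ℝ) * ((ℓ : ℝ) + 1)))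
    (hp : p = 4 * c * (1 - (ℓ : ℝ) * c) / (1 - ((ℓ : ℝ) - 1) * c) ^ 2)
    (g : ℝ → ℝ → ℝ) (hg : IsGraphon g) (hge : edgeDensity g = e)
    (hblocks : ∀ᵐ q ∂(unitMeasure.prod unitMeasure),
      (∀ k : ℕ, 1 ≤ k → k ≤ ℓ - 1 →
        ((q.1 < (k : ℝ) * c ∧ (k : ℝ) * c < q.2) ∨
         (q.2 < (k : ℝ) * c ∧ (k : ℝ) * c < q.1)) → g q.1 q.2 = 1) ∧
      (∀ k : ℕ, 1 ≤ k → k ≤ ℓ - 1 →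
        (((k : ℝ) - 1) * c < q.1 ∧ q.1 < (k : ℝ) * c ∧
         ((k : ℝ) - 1) * c < q.2 ∧ q.2 < (k : ℝ) * c) → g q.1 q.2 = 0))
    (htri : ∫ x in Icc (((ℓ : ℝ) - 1) * c) 1, ∫ y in Icc (((ℓ : ℝ) - 1) * c) 1,
      ∫ z in Icc (((ℓ : ℝ) - 1) * c) 1, g x y * g y z * g z x = 0) :
    rate g ≥ (1 - ((ℓ : ℝ) - 1) * c) ^ 2 / 2 * I0 p := by
  obtain ⟨hgm, hgs, hgb⟩ := hg
  have hgb0 : ∀ x y, 0 ≤ g x y := fun x y => (hgb x y).1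
  have hgb1 : ∀ x y, g x y ≤ 1 := fun x y => (hgb x y).2
  have hgabs : ∀ x y, |g x y| ≤ 1 := fun x y => abs_le.mpr ⟨by linarith [hgb0 x y], hgb1 x y⟩
  have mg2 : Measurable (fun q : ℝ × ℝ => g q.1 q.2) := hgm
  have mI0g : Measurable (fun q : ℝ × ℝ => I0 (g q.1 q.2)) := I0_continuous.measurable.comp mg2
  have hL2 : (2:ℝ) ≤ (ℓ:ℝ) := by exact_mod_cast hℓ
  have hL0 : (0:ℝ) < (ℓ:ℝ) := by linarith
  have hL1 : (0:ℝ) < (ℓ:ℝ) + 1 := by linarith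
  -- arithmetic facts about c
  have ht0 : 0 ≤ (ℓ:ℝ) * ((ℓ:ℝ) - e * ((ℓ:ℝ) + 1)) := by
    have h2 := he.2
    have h3 : e * ((ℓ:ℝ) + 1) ≤ (ℓ:ℝ) := by
      have h4 : (1 - 1/((ℓ:ℝ)+1)) * ((ℓ:ℝ)+1) = (ℓ:ℝ) := by field_simp; ring
      nlinarith
    nlinarith
  have hsq1 : (ℓ:ℝ) * ((ℓ:ℝ) - e * ((ℓ:ℝ) + 1)) ≤ 1 := by
    have h1 := he.1
    have h2 : (1 - 1/(ℓ:ℝ)) * ((ℓ:ℝ)+1) = (ℓ:ℝ) + 1 - 1 - 1/(ℓ:ℝ) := by field_simp; ring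
    have h3 : ((ℓ:ℝ) - 1/(ℓ:ℝ)) ≤ e * ((ℓ:ℝ)+1) := by nlinarith
    have h4 : (ℓ:ℝ) - e*((ℓ:ℝ)+1) ≤ 1/(ℓ:ℝ) := by linarith
    have h5 : (ℓ:ℝ) * (1/(ℓ:ℝ)) = 1 := by field_simp
    nlinarith
  have hsqrt0 := Real.sqrt_nonneg ((ℓ:ℝ) * ((ℓ:ℝ) - e * ((ℓ:ℝ) + 1)))
  have hsqrt1 : Real.sqrt ((ℓ:ℝ) * ((ℓ:ℝ) - e * ((ℓ:ℝ) + 1))) ≤ 1 := by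
    exact Real.sqrt_le_one.mpr hsq1
  have hc0 : 0 < c := by
    rw [hc]
    apply div_pos (by linarith) (by positivity)
  have hc_ub : c ≤ 1/(ℓ:ℝ) := by
    rw [hc, div_le_div_iff₀ (by positivity) hL0]
    nlinarith
  have hE : e = 2*(ℓ:ℝ)*c - (ℓ:ℝ)*((ℓ:ℝ)+1)*c^2 := by
    have hsqrt_eq : Real.sqrt ((ℓ:ℝ) * ((ℓ:ℝ) - e * ((ℓ:ℝ) + 1)))
        = c * ((ℓ:ℝ)*((ℓ:ℝ)+1)) - (ℓ:ℝ) := by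
      rw [hc]; field_simp; ring
    have hsq : (ℓ:ℝ) * ((ℓ:ℝ) - e * ((ℓ:ℝ) + 1))
        = (c * ((ℓ:ℝ)*((ℓ:ℝ)+1)) - (ℓ:ℝ))^2 := by
      rw [← hsqrt_eq, Real.sq_sqrt ht0]
    have hL' : (ℓ:ℝ)*((ℓ:ℝ)+1) ≠ 0 := by positivity
    have key : e * ((ℓ:ℝ)*((ℓ:ℝ)+1))
        = (2*(ℓ:ℝ)*c - (ℓ:ℝ)*((ℓ:ℝ)+1)*c^2) * ((ℓ:ℝ)*((ℓ:ℝ)+1)) := by nlinarith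
    exact mul_right_cancel₀ hL' key
  set a : ℝ := ((ℓ:ℝ)-1)*c with ha_def
  have ha0 : 0 ≤ a := mul_nonneg (by linarith) hc0.le
  have ha1 : a < 1 := by
    have h1 : ((ℓ:ℝ)-1) * c ≤ ((ℓ:ℝ)-1) * (1/(ℓ:ℝ)) :=
      mul_le_mul_of_nonneg_left hc_ub (by linarith)
    have h2 : ((ℓ:ℝ)-1) * (1/(ℓ:ℝ)) < 1 := by
      rw [mul_one_div, div_lt_one hL0]; linarith
    calc a ≤ ((ℓ:ℝ)-1) * (1/(ℓ:ℝ)) := h1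
      _ < 1 := h2
  -- measures
  haveI : IsFiniteMeasure unitMeasure := ⟨by
    rw [show unitMeasure = volume.restrict (Icc (0:ℝ) 1) from rfl,
      Measure.restrict_apply_univ, Real.volume_Icc]
    exact ENNReal.ofReal_lt_top⟩
  set K : Set ℝ := Icc a 1 with hK_def
  set U : Set ℝ := Icc (0:ℝ) 1 with hU_def
  have hKU : K ⊆ U := Icc_subset_Icc ha0 le_rfl
  have hKm : MeasurableSet K := measurableSet_Icc
  have hUm : MeasurableSet U := measurableSet_Icc
  have hKKm : MeasurableSet (K ×ˢ K) := hKm.prod hKm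
  set μ : Measure ℝ := volume.restrict K with hμ_def
  haveI : IsFiniteMeasure μ := ⟨by
    rw [hμ_def, Measure.restrict_apply_univ, hK_def, Real.volume_Icc]
    exact ENNReal.ofReal_lt_top⟩
  set PR : Measure (ℝ × ℝ) := unitMeasure.prod unitMeasure with hPR_def
  set pr2 : Measure (ℝ × ℝ) := μ.prod μ with hpr2_def
  have hBm : MeasurableSet (blks ℓ c) := by
    have : blks ℓ c = ⋃ k ∈ Finset.Icc 1 (ℓ-1), (blk c k) ×ˢ (blk c k) := rfl
    rw [this]
    exact MeasurableSet.biUnion (Finset.Icc 1 (ℓ-1)).countable_toSet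
      (fun k _ => measurableSet_Ioo.prod measurableSet_Ioo)
  -- null set of grid points
  set Mset : Set ℝ := ⋃ k ∈ Finset.range ℓ, {(k:ℝ)*c} with hM_def
  have hMm : MeasurableSet Mset :=
    MeasurableSet.biUnion (Finset.range ℓ).countable_toSet
      (fun k _ => measurableSet_singleton _)
  have hMvol : volume Mset = 0 := by
    rw [hM_def]
    refine (measure_biUnion_null_iff (Finset.range ℓ).countable_toSet).mpr ?_
    intro k _
    exact measure_singleton _
  have hMν : unitMeasure Mset = 0 := by
    rw [show unitMeasure = volume.restrict U from rfl, Measure.restrict_apply hMm]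
    exact measure_mono_null inter_subset_left hMvol
  have aeM1 : ∀ᵐ q : ℝ × ℝ ∂PR, q.1 ∉ Mset := by
    have h0 : PR (Mset ×ˢ (univ : Set ℝ)) = 0 := by
      rw [hPR_def, Measure.prod_prod, hMν, zero_mul]
    filter_upwards [measure_eq_zero_iff_ae_notMem.mp h0] with q hq hmem
    exact hq ⟨hmem, mem_univ _⟩
  have aeM2 : ∀ᵐ q : ℝ × ℝ ∂PR, q.2 ∉ Mset := by
    have h0 : PR ((univ : Set ℝ) ×ˢ Mset) = 0 := by
      rw [hPR_def, Measure.prod_prod, hMν, mul_zero]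
    filter_upwards [measure_eq_zero_iff_ae_notMem.mp h0] with q hq hmem
    exact hq ⟨mem_univ _, hmem⟩
  have aeU : ∀ᵐ q : ℝ × ℝ ∂PR, q ∈ U ×ˢ U := by
    rw [hPR_def, show unitMeasure = volume.restrict U from rfl, Measure.prod_restrict]
    exact ae_restrict_mem (hUm.prod hUm)
  have hMne : ∀ x : ℝ, x ∉ Mset → ∀ k : ℕ, k ≤ ℓ - 1 → x ≠ (k:ℝ)*c := by
    intro x hx k hk heq
    apply hx
    rw [hM_def]
    have hk' : k ∈ Finset.range ℓ := Finset.mem_range.mpr (by omega)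
    have hx' : x ∈ ({(k:ℝ)*c} : Set ℝ) := by simp [heq]
    exact Set.mem_biUnion (Finset.mem_coe.mpr hk') hx'
  -- master a.e. classification
  have master : ∀ᵐ q : ℝ × ℝ ∂PR,
      ((q ∈ K ×ˢ K) ∨ (g q.1 q.2 = 0 ∧ q ∈ blks ℓ c) ∨ g q.1 q.2 = 1)
      ∧ (q ∈ blks ℓ c → g q.1 q.2 = 0) := by
    filter_upwards [hblocks, aeU, aeM1, aeM2] with q hbl hqU h1 h2
    constructor
    · have hcl := classify ℓ hℓ hc0 hqU.1 hqU.2 (hMne _ h1) (hMne _ h2) hbl.1 hbl.2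
      rcases hcl with h | h | h
      · exact Or.inl (Set.mem_prod.mpr h)
      · exact Or.inr (Or.inl h)
      · exact Or.inr (Or.inr h)
    · exact fun hmem => blks_zero hbl.2 hmem
  have ae1 : (fun q : ℝ × ℝ => I0 (g q.1 q.2))
      =ᵐ[PR] (K ×ˢ K).indicator (fun q => I0 (g q.1 q.2)) := by
    filter_upwards [master] with q hq
    obtain ⟨hq, -⟩ := hq
    by_cases hmem : q ∈ K ×ˢ K
    · rw [Set.indicator_of_mem hmem]
    · rw [Set.indicator_of_notMem hmem]
      rcases hq with h | ⟨h0, -⟩ | h1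
      · exact absurd h hmem
      · rw [h0, I0_zero]
      · rw [h1, I0_one]
  have ae2 : (fun q : ℝ × ℝ => g q.1 q.2) =ᵐ[PR]
      (fun q => (K ×ˢ K).indicator (fun q : ℝ × ℝ => g q.1 q.2) q
        + ((K ×ˢ K) ∪ blks ℓ c)ᶜ.indicator 1 q) := by
    filter_upwards [master] with q hq
    obtain ⟨hq, hqB⟩ := hq
    by_cases hmem : q ∈ K ×ˢ K
    · rw [Set.indicator_of_mem hmem, Set.indicator_of_notMem
        (by simp only [Set.mem_compl_iff, not_not]; exact Or.inl hmem), add_zero]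
    · rw [Set.indicator_of_notMem hmem]
      by_cases hB : q ∈ blks ℓ c
      · rw [Set.indicator_of_notMem
          (by simp only [Set.mem_compl_iff, not_not]; exact Or.inr hB), hqB hB, zero_add]
      · rcases hq with h | ⟨-, hBmem⟩ | h1
        · exact absurd h hmem
        · exact absurd hBmem hB
        · rw [Set.indicator_of_mem (Set.mem_compl_iff _ _ |>.mpr (by
            rintro (h | h)
            exacts [hmem h, hB h])), h1, zero_add, Pi.one_apply]
  -- relating PR restricted to the corner with pr2
  have hPRU : PR = (volume.prod volume).restrict (U ×ˢ U) := by
    rw [hPR_def, show unitMeasure = volume.restrict U from rfl, Measure.prod_restrict]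
  have hpr2R : pr2 = (volume.prod volume).restrict (K ×ˢ K) := by
    rw [hpr2_def, hμ_def, Measure.prod_restrict]
  have hrestr : PR.restrict (K ×ˢ K) = pr2 := by
    rw [hPRU, hpr2R, Measure.restrict_restrict hKKm]
    congr 1
    exact Set.inter_eq_self_of_subset_left (Set.prod_mono hKU hKU)
  have int_I0g_PR : Integrable (fun q : ℝ × ℝ => I0 (g q.1 q.2)) PR :=
    integrable_bdd mI0g 1 (fun q => abs_I0_le_one (hgb q.1 q.2))
  have int_g_PR : Integrable (fun q : ℝ × ℝ => g q.1 q.2) PR :=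
    integrable_bdd mg2 1 (fun q => hgabs q.1 q.2)
  -- rate in terms of the corner
  have hrate : rate g = ∫ q, I0 (g q.1 q.2) ∂pr2 := by
    have h1 : rate g = ∫ q, I0 (g q.1 q.2) ∂PR :=
      integral_integral int_I0g_PR
    have h2 : ∫ q, I0 (g q.1 q.2) ∂PR = ∫ q in K ×ˢ K, I0 (g q.1 q.2) ∂PR := by
      rw [integral_congr_ae ae1, integral_indicator hKKm]
    rw [h1, h2, hrestr]
  set mC : ℝ := ∫ q, g q.1 q.2 ∂pr2 with hmC_def
  -- measure computations
  have hνK : unitMeasure K = ENNReal.ofReal (1-a) := by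
    rw [show unitMeasure = volume.restrict U from rfl, Measure.restrict_apply hKm,
      Set.inter_eq_self_of_subset_left hKU, hK_def, Real.volume_Icc]
  have hνU : unitMeasure univ = 1 := by
    rw [show unitMeasure = volume.restrict U from rfl, Measure.restrict_apply_univ,
      hU_def, Real.volume_Icc]
    norm_num
  have hPRuniv : PR univ = 1 := by
    rw [hPR_def, ← Set.univ_prod_univ, Measure.prod_prod, hνU, one_mul]
  have hPRK : PR (K ×ˢ K) = ENNReal.ofReal ((1-a)*(1-a)) := by
    rw [hPR_def, Measure.prod_prod, hνK, ← ENNReal.ofReal_mul (by linarith)]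
  have hνblk : ∀ k : ℕ, 1 ≤ k → k ≤ ℓ-1 → unitMeasure (blk c k) = ENNReal.ofReal c := by
    intro k hk1 hk2
    have hkr : (k:ℝ) * c ≤ a := by
      have h1 : (k:ℝ) ≤ (ℓ:ℝ) - 1 := by
        have h2 : (k:ℝ) ≤ ((ℓ-1:ℕ):ℝ) := by exact_mod_cast hk2
        have h3 : ((ℓ-1:ℕ):ℝ) = (ℓ:ℝ) - 1 := by
          push_cast [Nat.cast_sub (by omega : (1:ℕ) ≤ ℓ)]
          ring
        linarith [h3 ▸ h2]
      rw [ha_def]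
      exact mul_le_mul_of_nonneg_right h1 hc0.le
    have hsub : blk c k ⊆ U := by
      rw [hU_def]
      intro t ht
      obtain ⟨ht1, ht2⟩ := ht
      constructor
      · have : 0 ≤ ((k:ℝ)-1)*c := by
          apply mul_nonneg _ hc0.le
          have : (1:ℝ) ≤ (k:ℝ) := by exact_mod_cast hk1
          linarith
        linarith
      · linarith
    rw [show unitMeasure = volume.restrict U from rfl,
      show blk c k = Ioo (((k:ℝ)-1)*c) ((k:ℝ)*c) from rfl,
      Measure.restrict_apply measurableSet_Ioo,
      Set.inter_eq_self_of_subset_left (show Ioo (((k:ℝ)-1)*c) ((k:ℝ)*c) ⊆ U from hsub),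
      Real.volume_Ioo]
    congr 1
    ring
  have hPRblks : PR (blks ℓ c) = ENNReal.ofReal (((ℓ:ℝ)-1) * (c*c)) := by
    have hdisj : (↑(Finset.Icc 1 (ℓ-1)) : Set ℕ).PairwiseDisjoint
        (fun k => (blk c k) ×ˢ (blk c k)) := by
      intro j _ k _ hjk
      refine Set.disjoint_left.mpr (fun q hqj hqk => ?_)
      have h1 := hqj.1
      have h2 := hqk.1
      rw [blk] at h1 h2
      rcases lt_or_gt_of_ne hjk with h | h
      · have hjc : (j:ℝ) + 1 ≤ (k:ℝ) := by exact_mod_cast h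
        nlinarith [h1.2, h2.1]
      · have hjc : (k:ℝ) + 1 ≤ (j:ℝ) := by exact_mod_cast h
        nlinarith [h2.2, h1.1]
    have hsum := measure_biUnion_finset (μ := PR) hdisj
      (fun k _ => measurableSet_Ioo.prod measurableSet_Ioo)
    have heq : blks ℓ c = ⋃ k ∈ Finset.Icc 1 (ℓ-1), (blk c k) ×ˢ (blk c k) := rfl
    rw [heq, hsum]
    have heach : ∀ k ∈ Finset.Icc 1 (ℓ-1), PR ((blk c k) ×ˢ (blk c k))
        = ENNReal.ofReal (c*c) := by
      intro k hk
      rw [Finset.mem_Icc] at hk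
      rw [hPR_def, Measure.prod_prod, hνblk k hk.1 hk.2, ← ENNReal.ofReal_mul hc0.le]
    rw [Finset.sum_congr rfl heach, Finset.sum_const, Nat.card_Icc]
    simp only [Nat.add_sub_cancel]
    rw [nsmul_eq_mul, ← ENNReal.ofReal_natCast, ← ENNReal.ofReal_mul (by positivity)]
    congr 1
    have hcast : ((ℓ-1:ℕ):ℝ) = (ℓ:ℝ)-1 := by
      push_cast [Nat.cast_sub (by omega : (1:ℕ) ≤ ℓ)]
      ring
    rw [hcast]
  have hdisjKB : Disjoint (K ×ˢ K) (blks ℓ c) := by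
    refine Set.disjoint_left.mpr (fun q hqK hqB => ?_)
    exact blks_disjoint_corner hc0 (show (q.1, q.2) ∈ blks ℓ c from by rwa [Prod.mk.eta]) hqK.1
  have hCm : MeasurableSet (((K ×ˢ K) ∪ blks ℓ c)ᶜ) := (hKKm.union hBm).compl
  have hunion : PR ((K ×ˢ K) ∪ blks ℓ c)
      = ENNReal.ofReal ((1-a)*(1-a)) + ENNReal.ofReal (((ℓ:ℝ)-1)*(c*c)) := by
    rw [measure_union hdisjKB hBm, hPRK, hPRblks]
  have hle1 : PR ((K ×ˢ K) ∪ blks ℓ c) ≤ 1 := by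
    rw [← hPRuniv]
    exact measure_mono (subset_univ _)
  have htoreal : (PR (((K ×ˢ K) ∪ blks ℓ c)ᶜ)).toReal
      = 1 - ((1-a)*(1-a) + ((ℓ:ℝ)-1)*(c*c)) := by
    have hne : PR ((K ×ˢ K) ∪ blks ℓ c) ≠ ⊤ := by
      rw [hunion]
      exact ENNReal.add_ne_top.mpr ⟨ENNReal.ofReal_ne_top, ENNReal.ofReal_ne_top⟩
    rw [measure_compl (hKKm.union hBm) hne, hPRuniv, hunion,
      ENNReal.toReal_sub_of_le (by rw [← hunion]; exact hle1) ENNReal.one_ne_top,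
      ENNReal.toReal_one, ENNReal.toReal_add ENNReal.ofReal_ne_top ENNReal.ofReal_ne_top,
      ENNReal.toReal_ofReal (by nlinarith), ENNReal.toReal_ofReal (by nlinarith)]
  -- edge density decomposition
  have hedge : e = mC + (1 - ((1-a)*(1-a) + ((ℓ:ℝ)-1)*(c*c))) := by
    have h1 : e = ∫ q, g q.1 q.2 ∂PR := by
      rw [← hge]
      exact integral_integral int_g_PR
    have h2 : ∫ q, g q.1 q.2 ∂PR
        = (∫ q, (K ×ˢ K).indicator (fun q : ℝ × ℝ => g q.1 q.2) q ∂PR)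
          + ∫ q, ((K ×ˢ K) ∪ blks ℓ c)ᶜ.indicator 1 q ∂PR := by
      rw [integral_congr_ae ae2]
      exact integral_add (int_g_PR.indicator hKKm) ((integrable_const 1).indicator hCm)
    have h3 : ∫ q, (K ×ˢ K).indicator (fun q : ℝ × ℝ => g q.1 q.2) q ∂PR = mC := by
      rw [integral_indicator hKKm, hrestr]
    have h4 : ∫ q, ((K ×ˢ K) ∪ blks ℓ c)ᶜ.indicator 1 q ∂PR
        = (PR (((K ×ˢ K) ∪ blks ℓ c)ᶜ)).toReal := integral_indicator_one hCm
    rw [h1, h2, h3, h4, htoreal]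
  have hmCval : mC = 2*c*(1 - (ℓ:ℝ)*c) := by
    have h := hedge
    rw [ha_def, hE] at h
    linear_combination -h
  -- conclude via the corner bound
  have happ := corner_bound hgm hgs hgb ha0 ha1 htri
  have hane : (1:ℝ) - a ≠ 0 := by linarith
  have hps : mC / ((1-a)^2/2) = p := by
    rw [hp, hmCval]
    rw [ha_def]
    field_simp
    ring
  rw [ge_iff_le, hrate, ← hps]
  exact happ
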